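/- Let F be a field and let x : ℤ → F satisfy x(m) ≠ 0 for all m ∈ ℤ, x(m)·x(m+2) = 1 + x(m+1) for all odd m ∈ ℤ, and x(m)·x(m+2) = (1 + x(m+1))² for all even m ∈ ℤ. Then x(m+6) = x(m) for all m ∈ ℤ. -/

import Mathlib

-- even start: relations 2,1,2,1,2 exponents pattern (2,1,2,1,2)
lemma step1 {F : Type*} [Field F] (a b c d e f g : F)
    (ha : a ≠ 0) (hb : b ≠ 0) (hc : c ≠ 0) (hd : d ≠ 0) (he : e ≠ 0)
    (h0 : a * c = (1+b)^2) (h1 : b * d = 1 + c) (h2 : c * e = (1+d)^2)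
    (h3 : d * f = 1 + e) (h4 : e * g = (1+f)^2) : g = a := by
  have hb1 : (1+b) ≠ 0 := by
    have h := mul_ne_zero ha hc
    rw [h0] at h
    exact fun hh => h (by rw [hh]; ring)
  have hcv : c = (1+b)^2 / a := by field_simp; linear_combination h0
  have hdv : d = (a + (1+b)^2) / (a*b) := by
    field_simp
    linear_combination a * h1 + h0
  have hev : e = (a+b+1)^2 / (a*b^2) := by
    have hq : c * (a*b^2*e) = c * (a+b+1)^2 := by
      linear_combination (c - a) * h0 + (2*a*(b+1+c) + a*(b*d - 1 - c)) * h1 + a*b^2 * h2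
    have := mul_left_cancel₀ hc hq
    field_simp
    linear_combination this
  have hQ : a + b + 1 ≠ 0 := by
    have h := mul_ne_zero ha (mul_ne_zero (pow_ne_zero 2 hb) he)
    rw [hev] at h
    intro hh
    apply h
    rw [hh]
    simp
  have hfv : f = (a+1) / b := by
    have hP : a + (1+b)^2 ≠ 0 := by
      have h := mul_ne_zero (mul_ne_zero ha hb) hd
      rw [hdv] at h
      intro hh; apply h; rw [hh]; simp
    rw [hdv, hev] at h3
    field_simp at h3
    have key : ((a + (1+b)^2) * (a*b)) * (f*b) = ((a + (1+b)^2) * (a*b)) * (a+1) := by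
      linear_combination (a*b) * h3
    have := mul_left_cancel₀ (mul_ne_zero hP (mul_ne_zero ha hb)) key
    field_simp
    linear_combination this
  rw [hev, hfv] at h4
  field_simp at h4
  have key2 : ((a+b+1)^2 * b^2) * g = ((a+b+1)^2 * b^2) * a := by
    linear_combination b^2 * h4
  exact mul_left_cancel₀ (mul_ne_zero (pow_ne_zero 2 hQ) (pow_ne_zero 2 hb)) key2

lemma step2 {F : Type*} [Field F] (a b c d e f g : F)
    (ha : a ≠ 0) (hb : b ≠ 0) (hc : c ≠ 0) (hd : d ≠ 0) (he : e ≠ 0)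
    (h0 : a * c = 1 + b) (h1 : b * d = (1+c)^2) (h2 : c * e = 1 + d)
    (h3 : d * f = (1+e)^2) (h4 : e * g = 1 + f) : g = a := by
  have hb1 : (1+b) ≠ 0 := by rw [← h0]; exact mul_ne_zero ha hc
  have hcv : c = (1+b) / a := by field_simp; linear_combination h0
  have hdv : d = (a+b+1)^2 / (a^2*b) := by
    rw [hcv] at h1
    field_simp at h1 ⊢
    linear_combination h1
  have hQ : a + b + 1 ≠ 0 := by
    have h := mul_ne_zero (mul_ne_zero (pow_ne_zero 2 ha) hb) hd
    rw [hdv] at h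
    intro hh; apply h; rw [hh]; simp
  have hev : e = ((a+1)^2 + b) / (a*b) := by
    rw [hcv, hdv] at h2
    field_simp at h2
    have key : ((1+b)*(a*b)) * (e*(a*b)) = ((1+b)*(a*b)) * ((a+1)^2+b) := by
      linear_combination (a*b)*h2
    have h := mul_left_cancel₀ (mul_ne_zero hb1 (mul_ne_zero ha hb)) key
    field_simp
    linear_combination h
  have hP : (a+1)^2 + b ≠ 0 := by
    have h := mul_ne_zero (mul_ne_zero ha hb) he
    rw [hev] at h
    intro hh; apply h; rw [hh]; simp
  have hfv : f = (a+1)^2 / b := by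
    rw [hdv, hev] at h3
    field_simp at h3
    have key : ((a+b+1)^2 * (a^2*b)) * (f*b) = ((a+b+1)^2 * (a^2*b)) * (a+1)^2 := by
      linear_combination (a^2*b) * h3
    have h := mul_left_cancel₀ (mul_ne_zero (pow_ne_zero 2 hQ) (mul_ne_zero (pow_ne_zero 2 ha) hb)) key
    field_simp
    linear_combination h
  rw [hev, hfv] at h4
  field_simp at h4
  have key2 : (((a+1)^2 + b) * b) * g = (((a+1)^2 + b) * b) * a := by
    linear_combination b * h4
  exact mul_left_cancel₀ (mul_ne_zero hP hb) key2

/-- Periodicity of the type C₂ generalised cluster recursion. -/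
theorem period_six {F : Type*} [Field F] (x : ℤ → F)
    (hx : ∀ m, x m ≠ 0)
    (hodd : ∀ m, Odd m → x m * x (m + 2) = 1 + x (m + 1))
    (heven : ∀ m, Even m → x m * x (m + 2) = (1 + x (m + 1)) ^ 2) :
    ∀ m, x (m + 6) = x m := by
  intro m
  rcases Int.even_or_odd m with hm | hm
  · obtain ⟨k, hk⟩ := hm
    have e0 : Even m := ⟨k, hk⟩
    have e2 : Even (m+2) := ⟨k+1, by omega⟩
    have e4 : Even (m+4) := ⟨k+2, by omega⟩
    have o1 : Odd (m+1) := ⟨k, by omega⟩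
    have o3 : Odd (m+3) := ⟨k+1, by omega⟩
    have h0 := heven m e0
    have h1 := hodd (m+1) o1
    have h2 := heven (m+2) e2
    have h3 := hodd (m+3) o3
    have h4 := heven (m+4) e4
    rw [show m+1+2 = m+3 by ring, show m+1+1 = m+2 by ring] at h1
    rw [show m+2+2 = m+4 by ring, show m+2+1 = m+3 by ring] at h2
    rw [show m+3+2 = m+5 by ring, show m+3+1 = m+4 by ring] at h3
    rw [show m+4+2 = m+6 by ring, show m+4+1 = m+5 by ring] at h4
    exact step1 (x m) (x (m+1)) (x (m+2)) (x (m+3)) (x (m+4)) (x (m+5)) (x (m+6))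
      (hx m) (hx (m+1)) (hx (m+2)) (hx (m+3)) (hx (m+4)) h0 h1 h2 h3 h4
  · obtain ⟨k, hk⟩ := hm
    have o0 : Odd m := ⟨k, hk⟩
    have o2 : Odd (m+2) := ⟨k+1, by omega⟩
    have o4 : Odd (m+4) := ⟨k+2, by omega⟩
    have e1 : Even (m+1) := ⟨k+1, by omega⟩
    have e3 : Even (m+3) := ⟨k+2, by omega⟩
    have h0 := hodd m o0
    have h1 := heven (m+1) e1
    have h2 := hodd (m+2) o2
    have h3 := heven (m+3) e3
    have h4 := hodd (m+4) o4
    rw [show m+1+2 = m+3 by ring, show m+1+1 = m+2 by ring] at h1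
    rw [show m+2+2 = m+4 by ring, show m+2+1 = m+3 by ring] at h2
    rw [show m+3+2 = m+5 by ring, show m+3+1 = m+4 by ring] at h3
    rw [show m+4+2 = m+6 by ring, show m+4+1 = m+5 by ring] at h4
    exact step2 (x m) (x (m+1)) (x (m+2)) (x (m+3)) (x (m+4)) (x (m+5)) (x (m+6))
      (hx m) (hx (m+1)) (hx (m+2)) (hx (m+3)) (hx (m+4)) h0 h1 h2 h3 h4
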